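/- Let G be an edge-minimum valid experiment graph. If e is an edge incident on a vertex u with colour degree d(u, c(e)) = 1 (i.e., e is the unique edge incident on u whose colour at u is c(e)), then e is colour isolated, meaning e is monochromatic of colour c(e) and also d(v, c(e)) = 1 where v is the other endpoint of e. -/

import Mathlib

open scoped Classical

noncomputable section

/-- An experiment graph: a finite simple graph with complex edge weights
(nonzero on edges) and, for each edge, a colour at each endpoint:
`col a b` is the colour of the edge `{a,b}` at the endpoint `a`. -/
structure ExpGraph (V : Type) [Fintype V] [DecidableEq V] (μ : ℕ) where
  G : SimpleGraph V
  w : Sym2 V → ℂ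
  w_ne : ∀ e ∈ G.edgeSet, w e ≠ 0
  col : V → V → Fin μ

namespace ExpGraph

variable {V : Type} [Fintype V] [DecidableEq V] {μ : ℕ}

/-- `m` encodes a perfect matching: a fixed-point-free involution matching
each vertex to an adjacent vertex. -/
def IsPM (E : ExpGraph V μ) (m : V → V) : Prop :=
  ∀ x, E.G.Adj x (m x) ∧ m (m x) = x

/-- The product of the weights of the edges of the perfect matching `m`. -/
def matchWeight (E : ExpGraph V μ) (m : V → V) : ℂ :=
  (Finset.univ.image fun x => s(x, m x)).prod E.w

/-- The perfect matching `m` induces the vertex colouring `vc`. -/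
def Induces (E : ExpGraph V μ) (m : V → V) (vc : V → Fin μ) : Prop :=
  ∀ x, E.col x (m x) = vc x

/-- The weight of a vertex colouring: the sum, over all perfect matchings
inducing it, of the product of the weights of the matching edges. -/
def weight (E : ExpGraph V μ) (vc : V → Fin μ) : ℂ :=
  ∑ m ∈ Finset.univ.filter (fun m : V → V => E.IsPM m ∧ E.Induces m vc),
    E.matchWeight m

/-- A valid experiment graph: each monochromatic vertex colouring has
weight 1 and all other vertex colourings have weight 0. -/
def Valid (E : ExpGraph V μ) : Prop :=
  (∀ i : Fin μ, E.weight (fun _ => i) = 1) ∧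
  (∀ vc : V → Fin μ, (∀ i : Fin μ, vc ≠ fun _ => i) → E.weight vc = 0)

/-- Number of edges. -/
def edgeCount (E : ExpGraph V μ) : ℕ := E.G.edgeSet.ncard

/-- The colour degree `d(x,i)`: number of edges incident on `x` whose colour at `x` is `i`. -/
def colDeg (E : ExpGraph V μ) (x : V) (i : Fin μ) : ℕ :=
  (Finset.univ.filter fun y => E.G.Adj x y ∧ E.col x y = i).card

/-- Edge-minimum valid experiment graph: valid, and no valid experiment graph
with the same number of vertices and the same dimension has fewer edges. -/
def EdgeMin (E : ExpGraph V μ) : Prop :=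
  E.Valid ∧ ∀ (V' : Type) [Fintype V'] [DecidableEq V'] (E' : ExpGraph V' μ),
    E'.Valid → Fintype.card V' = Fintype.card V → E.edgeCount ≤ E'.edgeCount

/-- The edge `{x,y}` is colour isolated of colour `i`: it is monochromatic of colour `i`
and `d(x,i) = d(y,i) = 1`. -/
def ColIso (E : ExpGraph V μ) (x y : V) (i : Fin μ) : Prop :=
  E.G.Adj x y ∧ E.col x y = i ∧ E.col y x = i ∧ E.colDeg x i = 1 ∧ E.colDeg y i = 1

end ExpGraph

/-- in an edge-minimum valid experiment graph, an edge `e = {u,v}`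
with `d(u, c(e,u)) = 1` is colour isolated: it is monochromatic and both
endpoints have colour degree one with respect to its colour. -/
theorem unique_colour_edge_is_colour_isolated
    {V : Type} [Fintype V] [DecidableEq V] {μ : ℕ}
    (E : ExpGraph V μ) (hmin : E.EdgeMin) (u v : V) (huv : E.G.Adj u v)
    (hdu : E.colDeg u (E.col u v) = 1) :
    E.ColIso u v (E.col u v) := by
  classical
  obtain ⟨hvalid, hminle⟩ := hmin
  set c := E.col u v with hc
  have hne : u ≠ v := huv.ne
  -- uniqueness of the colour-c edge at u
  have huniq : ∀ z, E.G.Adj u z → E.col u z = c → z = v := by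
    intro z hz hcz
    have hcard : (Finset.univ.filter fun y => E.G.Adj u y ∧ E.col u y = c).card = 1 := hdu
    obtain ⟨a, ha⟩ := Finset.card_eq_one.mp hcard
    have hv : v ∈ Finset.univ.filter fun y => E.G.Adj u y ∧ E.col u y = c := by
      simp [huv]
      exact hc.symm
    have hz' : z ∈ Finset.univ.filter fun y => E.G.Adj u y ∧ E.col u y = c := by
      simp [hz, hcz]
    rw [ha, Finset.mem_singleton] at hv hz'
    rw [hz', ← hv]
  -- a matching inducing the all-c colouring exists
  have hex : ∃ m, E.IsPM m ∧ E.Induces m (fun _ => c) := by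
    by_contra h
    push_neg at h
    have hz : E.weight (fun _ => c) = 0 := by
      unfold ExpGraph.weight
      rw [Finset.filter_eq_empty_iff.mpr, Finset.sum_empty]
      intro m _ hm
      exact h m hm.1 hm.2
    rw [hvalid.1 c] at hz
    exact one_ne_zero hz
  obtain ⟨m₀, hm₀PM, hm₀I⟩ := hex
  have hm₀u : m₀ u = v := huniq (m₀ u) (hm₀PM u).1 (hm₀I u)
  have hm₀v : m₀ v = u := by
    have := (hm₀PM u).2
    rwa [hm₀u] at this
  have hcolvu : E.col v u = c := by
    have := hm₀I v
    rwa [hm₀v] at this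
  refine ⟨huv, rfl, hcolvu, hdu, ?_⟩
  -- now prove colDeg v c = 1 by contradiction using edge-minimality
  by_contra hdv
  have hwit : ∃ w, E.G.Adj v w ∧ E.col v w = c ∧ w ≠ u := by
    by_contra h
    push_neg at h
    have hsub : (Finset.univ.filter fun y => E.G.Adj v y ∧ E.col v y = c) = {u} := by
      apply Finset.eq_singleton_iff_unique_mem.mpr
      refine ⟨by simp [huv.symm, hcolvu], ?_⟩
      intro y hy
      simp only [Finset.mem_filter, Finset.mem_univ, true_and] at hy
      exact h y hy.1 hy.2
    apply hdv
    unfold ExpGraph.colDeg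
    rw [hsub, Finset.card_singleton]
  obtain ⟨w, hadjvw, hcolvw, hwu⟩ := hwit
  -- the set of deleted edges
  set D : Set (Sym2 V) := {e | ∃ z, z ≠ u ∧ E.G.Adj v z ∧ E.col v z = c ∧ e = s(v, z)} with hD
  have hDsub : ∀ e ∈ D, e ∈ E.G.edgeSet := by
    rintro e ⟨z, _, hadj, _, rfl⟩
    exact hadj
  -- the smaller experiment graph
  set E' : ExpGraph V μ :=
    { G := E.G.deleteEdges D
      w := E.w
      w_ne := by
        intro e he
        apply E.w_ne
        rw [SimpleGraph.edgeSet_deleteEdges] at he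
        exact he.1
      col := E.col } with hE'
  have hadj' : ∀ a b, E'.G.Adj a b ↔ E.G.Adj a b ∧ s(a, b) ∉ D := by
    intro a b
    exact SimpleGraph.deleteEdges_adj
  -- key: matchings inducing "good" colourings avoid deleted edges
  have key : ∀ (m : V → V) (vc : V → Fin μ), E.IsPM m → E.Induces m vc →
      (vc u = c ∨ vc v ≠ c) → ∀ x, s(x, m x) ∉ D := by
    intro m vc hPM hInd hvc x hxD
    obtain ⟨z, hzu, hadj, hcol, heq⟩ := hxD
    rw [Sym2.eq_iff] at heq
    have hmv : E.col v (m v) = c ∧ m v ≠ u := by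
      rcases heq with ⟨hx, hmx⟩ | ⟨hx, hmx⟩
      · subst hx
        rw [hmx]
        exact ⟨hcol, hzu⟩
      · have hxmv : m v = x := by
          rw [← hmx, (hPM x).2]
        rw [hxmv, hx]
        exact ⟨hcol, hzu⟩
    have hvcv : vc v = c := by rw [← hInd v]; exact hmv.1
    have hvcu : vc u = c := by
      rcases hvc with h | h
      · exact h
      · exact absurd hvcv h
    have hmu : m u = v := huniq (m u) (hPM u).1 (by rw [hInd u]; exact hvcu)
    have hmvu : m v = u := by
      have := (hPM u).2
      rwa [hmu] at this
    exact hmv.2 hmvu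
  -- weight equality for good colourings
  have hweq : ∀ vc : V → Fin μ, (vc u = c ∨ vc v ≠ c) → E'.weight vc = E.weight vc := by
    intro vc hvc
    unfold ExpGraph.weight
    apply Finset.sum_congr
    · ext m
      simp only [Finset.mem_filter, Finset.mem_univ, true_and]
      constructor
      · rintro ⟨hPM, hInd⟩
        have hPM' : E.IsPM m := by
          intro x
          exact ⟨((hadj' x (m x)).mp (hPM x).1).1, (hPM x).2⟩
        exact ⟨hPM', hInd⟩
      · rintro ⟨hPM, hInd⟩
        refine ⟨?_, hInd⟩
        intro x
        refine ⟨(hadj' x (m x)).mpr ⟨(hPM x).1, key m vc hPM hInd hvc x⟩, (hPM x).2⟩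
    · intro m _
      rfl
  -- zero weight for bad colourings
  have hwzero : ∀ vc : V → Fin μ, vc v = c → vc u ≠ c → E'.weight vc = 0 := by
    intro vc h1 h2
    unfold ExpGraph.weight
    rw [Finset.filter_eq_empty_iff.mpr, Finset.sum_empty]
    intro m _
    rintro ⟨hPM, hInd⟩
    have hav := (hadj' v (m v)).mp (hPM v).1
    have hcolv : E.col v (m v) = c := by
      have := hInd v
      rw [h1] at this
      exact this
    have hmvu : m v = u := by
      by_contra hmv
      exact hav.2 ⟨m v, hmv, hav.1, hcolv, rfl⟩
    have hmuv : m u = v := by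
      have := (hPM v).2
      rwa [hmvu] at this
    apply h2
    rw [← hInd u, hmuv]
  -- E' is valid
  have hvalid' : E'.Valid := by
    constructor
    · intro j
      rcases eq_or_ne j c with rfl | hj
      · rw [hweq _ (Or.inl rfl)]
        exact hvalid.1 _
      · rw [hweq _ (Or.inr hj)]
        exact hvalid.1 _
    · intro vc hvc
      by_cases h1 : vc v = c
      · by_cases h2 : vc u = c
        · rw [hweq _ (Or.inl h2)]
          exact hvalid.2 vc hvc
        · exact hwzero vc h1 h2
      · rw [hweq _ (Or.inr h1)]
        exact hvalid.2 vc hvc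
  -- E' has strictly fewer edges
  have hlt : E'.edgeCount < E.edgeCount := by
    unfold ExpGraph.edgeCount
    have hE'edges : E'.G.edgeSet = E.G.edgeSet \ D := SimpleGraph.edgeSet_deleteEdges D
    rw [hE'edges]
    apply Set.ncard_lt_ncard
    · constructor
      · exact Set.diff_subset
      · intro hsub
        have hmem : s(v, w) ∈ E.G.edgeSet := hadjvw
        have := hsub hmem
        exact this.2 ⟨w, hwu, hadjvw, hcolvw, rfl⟩
    · exact Set.toFinite _
  have hle := hminle V E' hvalid' rfl
  exact absurd hle (not_le.mpr hlt)
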